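/- Let α, β, k be real numbers with α > −1, β > −1 and 0 < k < β + 1. Then, entrywise, ∫₀¹ W(x) dx = μ₀, where W is the 2×2 matrix-valued weight of the context and μ₀ = (Γ(α+1)Γ(β+2)(α+β−k+2)/Γ(α+β+3)) · [[1, 0], [0, (α+1)(k+1)/((α+β+3)(β−k+1))]]. -/

import Mathlib

open Matrix

noncomputable def Vmat (α β k : ℝ) : Matrix (Fin 2) (Fin 2) ℝ :=
  !![1, 1; 0, -(α + β - k + 2) / (β - k + 1)]

noncomputable def Zmat (β k : ℝ) (x : ℝ) : Matrix (Fin 2) (Fin 2) ℝ :=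
  !![k * x + β - k + 1, (β - k + 1) * (1 - x);
     (β - k + 1) * (1 - x), (β - k + 1) * (1 - x) ^ 2]

/-- The weight matrix `W(x) = x^α (1-x)^β Vᵀ Z(x) V` of the `d = 2`
Jacobi-type example. -/
noncomputable def Wmat (α β k : ℝ) (x : ℝ) : Matrix (Fin 2) (Fin 2) ℝ :=
  (x ^ α * (1 - x) ^ β) • ((Vmat α β k)ᵀ * Zmat β k x * Vmat α β k)

/-- The zeroth moment `μ₀` of the weight `W` of the `d = 2` Jacobi-type
example. -/
noncomputable def mu0 (α β k : ℝ) : Matrix (Fin 2) (Fin 2) ℝ :=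
  (Real.Gamma (α + 1) * Real.Gamma (β + 2) * (α + β - k + 2) /
      Real.Gamma (α + β + 3)) •
    !![1, 0; 0, (α + 1) * (k + 1) / ((α + β + 3) * (β - k + 1))]

/-- The `(-1)`-st moment `μ₋₁` of the weight `W` of the `d = 2` Jacobi-type
example. -/
noncomputable def muM1 (α β k : ℝ) : Matrix (Fin 2) (Fin 2) ℝ :=
  (Real.Gamma α * Real.Gamma (β + 2) / Real.Gamma (α + β + 2)) •
    !![α + β - k + 1, -1;
       -1, ((α + 1) * (k + 1) * (α + β - k + 2) - k * (β - k + 1)) /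
         ((α + β + 2) * (β - k + 1))]


open Real MeasureTheory Set

lemma ptwise (p q x : ℝ) (hx : x ∈ Set.Ioo (0:ℝ) 1) :
    (x:ℂ) ^ (((p+1:ℝ):ℂ) - 1) * ((1:ℂ) - x) ^ (((q+1:ℝ):ℂ) - 1)
      = ((x ^ p * (1-x) ^ q : ℝ) : ℂ) := by
  obtain ⟨hx0, hx1⟩ := hx
  have h1 : ((p+1:ℝ):ℂ) - 1 = ((p:ℝ):ℂ) := by push_cast; ring
  have h2 : ((q+1:ℝ):ℂ) - 1 = ((q:ℝ):ℂ) := by push_cast; ring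
  have h3 : (1:ℂ) - (x:ℂ) = ((1-x:ℝ):ℂ) := by push_cast; ring
  rw [h1, h2, h3, ← Complex.ofReal_cpow hx0.le, ← Complex.ofReal_cpow (by linarith),
    ← Complex.ofReal_mul]

lemma intG {p q : ℝ} (hp : -1 < p) (hq : -1 < q) :
    IntegrableOn (fun x : ℝ => x ^ p * (1-x) ^ q) (Set.Ioo (0:ℝ) 1) := by
  have h := (Complex.betaIntegral_convergent (u := ((p+1:ℝ):ℂ)) (v := ((q+1:ℝ):ℂ))
    (by simpa using by linarith) (by simpa using by linarith)).1
  have hre : IntegrableOn (fun x : ℝ => (((x:ℂ) ^ (((p+1:ℝ):ℂ) - 1) * ((1:ℂ) - x) ^ (((q+1:ℝ):ℂ) - 1))).re) (Set.Ioc (0:ℝ) 1) := h.re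
  have h2 := hre.mono_set Set.Ioo_subset_Ioc_self
  refine h2.congr_fun (fun x hx => ?_) measurableSet_Ioo
  beta_reduce
  rw [ptwise p q x hx, Complex.ofReal_re]

lemma keyG {p q : ℝ} (hp : -1 < p) (hq : -1 < q) :
    ∫ x in Set.Ioo (0:ℝ) 1, x ^ p * (1-x) ^ q
      = Gamma (p+1) * Gamma (q+1) / Gamma (p+q+2) := by
  have hp1 : 0 < ((((p+1):ℝ):ℂ)).re := by simpa using by linarith
  have hq1 : 0 < ((((q+1):ℝ):ℂ)).re := by simpa using by linarith
  have hB := Complex.Gamma_mul_Gamma_eq_betaIntegral hp1 hq1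
  have hval : Complex.betaIntegral ((p+1:ℝ):ℂ) ((q+1:ℝ):ℂ)
      = ((∫ x in Set.Ioo (0:ℝ) 1, x ^ p * (1-x) ^ q : ℝ) : ℂ) := by
    rw [Complex.betaIntegral, intervalIntegral.integral_of_le zero_le_one,
      MeasureTheory.integral_Ioc_eq_integral_Ioo,
      MeasureTheory.setIntegral_congr_fun measurableSet_Ioo (fun x hx => ptwise p q x hx)]
    exact integral_ofReal
  rw [hval, ← Complex.ofReal_add, Complex.Gamma_ofReal, Complex.Gamma_ofReal,
    Complex.Gamma_ofReal, ← Complex.ofReal_mul, ← Complex.ofReal_mul] at hB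
  have hB' := Complex.ofReal_inj.mp hB
  have hΓ : Gamma (p+1+(q+1)) ≠ 0 := (Gamma_pos_of_pos (by linarith)).ne'
  have : p+1+(q+1) = p+q+2 := by ring
  rw [this] at hB' hΓ
  field_simp
  linarith [hB']

lemma keyG' {p q : ℝ} (s t r : ℝ) (hp : -1 < p) (hq : -1 < q)
    (hs : s = p+1) (ht : t = q+1) (hr : r = p+q+2) :
    ∫ x in Set.Ioo (0:ℝ) 1, x ^ p * (1-x) ^ q = Gamma s * Gamma t / Gamma r := by
  subst hs ht hr; exact keyG hp hq

lemma master (α β A B C D : ℝ) (hα : -1 < α) (hβ : -1 < β) :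
    ∫ x in Set.Ioo (0:ℝ) 1,
        (x ^ α * (1-x) ^ β) * (A + B * x + C * (1-x) + D * (1-x) ^ 2)
      = A * (Gamma (α+1) * Gamma (β+1) / Gamma (α+β+2))
        + B * (Gamma (α+2) * Gamma (β+1) / Gamma (α+β+3))
        + C * (Gamma (α+1) * Gamma (β+2) / Gamma (α+β+3))
        + D * (Gamma (α+1) * Gamma (β+3) / Gamma (α+β+4)) := by
  have hα1 : -1 < α + 1 := by linarith
  have hβ1 : -1 < β + 1 := by linarith
  have hβ2 : -1 < β + 2 := by linarith
  have hA := (intG hα hβ).const_mul A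
  have hB := (intG hα1 hβ).const_mul B
  have hC := (intG hα hβ1).const_mul C
  have hD := (intG hα hβ2).const_mul D
  have hAB : IntegrableOn (fun x : ℝ => A * (x ^ α * (1-x) ^ β)
      + B * (x ^ (α+1) * (1-x) ^ β)) (Set.Ioo (0:ℝ) 1) := hA.add hB
  have hABC : IntegrableOn (fun x : ℝ => A * (x ^ α * (1-x) ^ β)
      + B * (x ^ (α+1) * (1-x) ^ β) + C * (x ^ α * (1-x) ^ (β+1)))
      (Set.Ioo (0:ℝ) 1) := hAB.add hC
  rw [MeasureTheory.setIntegral_congr_fun measurableSet_Ioo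
    (g := fun x : ℝ => A * (x ^ α * (1-x) ^ β) + B * (x ^ (α+1) * (1-x) ^ β)
      + C * (x ^ α * (1-x) ^ (β+1)) + D * (x ^ α * (1-x) ^ (β+2)))
    (fun x hx => ?_)]
  · rw [MeasureTheory.integral_add hABC hD,
      MeasureTheory.integral_add hAB hC,
      MeasureTheory.integral_add hA hB,
      MeasureTheory.integral_const_mul, MeasureTheory.integral_const_mul,
      MeasureTheory.integral_const_mul, MeasureTheory.integral_const_mul,
      keyG' (α+1) (β+1) (α+β+2) hα hβ (by ring) (by ring) (by ring),
      keyG' (α+2) (β+1) (α+β+3) hα1 hβ (by ring) (by ring) (by ring),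
      keyG' (α+1) (β+2) (α+β+3) hα hβ1 (by ring) (by ring) (by ring),
      keyG' (α+1) (β+3) (α+β+4) hα hβ2 (by ring) (by ring) (by ring)]
  · obtain ⟨hx0, hx1⟩ := hx
    have e1 : x ^ (α+1) = x ^ α * x := by
      rw [Real.rpow_add_one hx0.ne']
    have e2 : (1-x) ^ (β+1) = (1-x) ^ β * (1-x) := by
      rw [Real.rpow_add_one (by linarith : (1:ℝ) - x ≠ 0)]
    have e3 : (1-x) ^ (β+2) = (1-x) ^ β * (1-x) ^ (2:ℕ) := by
      rw [show β + 2 = β + (2:ℕ) by norm_num,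
        Real.rpow_add (by linarith : (0:ℝ) < 1 - x), Real.rpow_natCast]
    beta_reduce
    rw [e1, e2, e3]; ring

set_option maxHeartbeats 1000000 in
/-- The zeroth moment of the weight `W`: `∫₀¹ W(x) dx = μ₀`, entrywise. -/
theorem stmt_12 (α β k : ℝ) (hα : α > -1) (hβ : β > -1)
    (hk : 0 < k) (hkβ : k < β + 1) :
    ∀ i j : Fin 2,
      ∫ x in (0 : ℝ)..1, Wmat α β k x i j = mu0 α β k i j := by
  have hd : (0:ℝ) < β - k + 1 := by linarith
  have G1 : Gamma (α+2) = (α+1) * Gamma (α+1) := by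
    rw [show α+2 = (α+1)+1 by ring, Real.Gamma_add_one (by linarith)]
  have G2 : Gamma (β+2) = (β+1) * Gamma (β+1) := by
    rw [show β+2 = (β+1)+1 by ring, Real.Gamma_add_one (by linarith)]
  have G3 : Gamma (β+3) = (β+2) * ((β+1) * Gamma (β+1)) := by
    rw [show β+3 = (β+2)+1 by ring, Real.Gamma_add_one (by linarith), G2]
  have G4 : Gamma (α+β+3) = (α+β+2) * Gamma (α+β+2) := by
    rw [show α+β+3 = (α+β+2)+1 by ring, Real.Gamma_add_one (by linarith)]
  have G5 : Gamma (α+β+4) = (α+β+3) * ((α+β+2) * Gamma (α+β+2)) := by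
    rw [show α+β+4 = (α+β+3)+1 by ring, Real.Gamma_add_one (by linarith), G4]
  have P1 : 0 < Gamma (α+1) := Real.Gamma_pos_of_pos (by linarith)
  have P2 : 0 < Gamma (β+1) := Real.Gamma_pos_of_pos (by linarith)
  have P3 : 0 < Gamma (α+β+2) := Real.Gamma_pos_of_pos (by linarith)
  have Q1 : (α+β+2) ≠ 0 := by intro h; linarith
  have Q2 : (α+β+3) ≠ 0 := by intro h; linarith
  have hVT : (Vmat α β k)ᵀ = !![1, 0; 1, -(α + β - k + 2) / (β - k + 1)] := by
    ext i j; fin_cases i <;> fin_cases j <;> rfl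
  intro i j
  have key : ∀ A B C D : ℝ,
      (∀ x ∈ Set.Ioo (0:ℝ) 1, Wmat α β k x i j
        = (x ^ α * (1-x) ^ β) * (A + B * x + C * (1-x) + D * (1-x) ^ 2)) →
      ∫ x in (0 : ℝ)..1, Wmat α β k x i j
        = A * (Gamma (α+1) * Gamma (β+1) / Gamma (α+β+2))
          + B * (Gamma (α+2) * Gamma (β+1) / Gamma (α+β+3))
          + C * (Gamma (α+1) * Gamma (β+2) / Gamma (α+β+3))
          + D * (Gamma (α+1) * Gamma (β+3) / Gamma (α+β+4)) := by
    intro A B C D h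
    rw [intervalIntegral.integral_of_le zero_le_one,
      MeasureTheory.integral_Ioc_eq_integral_Ioo,
      MeasureTheory.setIntegral_congr_fun measurableSet_Ioo h,
      master α β A B C D hα hβ]
  fin_cases i <;> fin_cases j
  · rw [key (β-k+1) k 0 0 (fun x hx => by
      rw [Wmat, Matrix.smul_apply, smul_eq_mul]
      congr 1
      rw [hVT, Zmat, Vmat, Matrix.mul_fin_two, Matrix.mul_fin_two]
      norm_num
      ring)]
    simp only [mu0, Matrix.smul_apply, Matrix.cons_val_zero, Matrix.cons_val',
      Matrix.of_apply, Matrix.empty_val', Matrix.cons_val_fin_one, smul_eq_mul, Fin.zero_eta, Fin.mk_one]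
    rw [G1, G2, G3, G4, G5]
    field_simp
    ring
  · rw [key (β-k+1) k (-(α+β-k+2)) 0 (fun x hx => by
      have hd' : β - k + 1 ≠ 0 := hd.ne'
      rw [Wmat, Matrix.smul_apply, smul_eq_mul]
      congr 1
      rw [hVT, Zmat, Vmat, Matrix.mul_fin_two, Matrix.mul_fin_two]
      norm_num
      field_simp
      ring)]
    simp only [mu0, Matrix.smul_apply, Matrix.cons_val_zero, Matrix.cons_val_one,
      Matrix.head_cons, Matrix.cons_val', Matrix.of_apply, Matrix.empty_val',
      Matrix.cons_val_fin_one, smul_eq_mul, Fin.zero_eta, Fin.mk_one]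
    rw [G1, G2, G3, G4, G5]
    field_simp
    ring
  · rw [key (β-k+1) k (-(α+β-k+2)) 0 (fun x hx => by
      have hd' : β - k + 1 ≠ 0 := hd.ne'
      rw [Wmat, Matrix.smul_apply, smul_eq_mul]
      congr 1
      rw [hVT, Zmat, Vmat, Matrix.mul_fin_two, Matrix.mul_fin_two]
      norm_num
      field_simp
      ring)]
    simp only [mu0, Matrix.smul_apply, Matrix.cons_val_zero, Matrix.cons_val_one,
      Matrix.head_cons, Matrix.cons_val', Matrix.of_apply, Matrix.empty_val',
      Matrix.cons_val_fin_one, smul_eq_mul, Fin.zero_eta, Fin.mk_one]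
    rw [G1, G2, G3, G4, G5]
    field_simp
    ring
  · rw [key (β-k+1) k (-2*(α+β-k+2)) ((α+β-k+2)^2/(β-k+1)) (fun x hx => by
      have hd' : β - k + 1 ≠ 0 := hd.ne'
      rw [Wmat, Matrix.smul_apply, smul_eq_mul]
      congr 1
      rw [hVT, Zmat, Vmat, Matrix.mul_fin_two, Matrix.mul_fin_two]
      norm_num
      field_simp
      ring)]
    simp only [mu0, Matrix.smul_apply, Matrix.cons_val_zero, Matrix.cons_val_one,
      Matrix.head_cons, Matrix.cons_val', Matrix.of_apply, Matrix.empty_val',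
      Matrix.cons_val_fin_one, smul_eq_mul, Fin.zero_eta, Fin.mk_one]
    rw [G1, G2, G3, G4, G5]
    field_simp
    ring
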